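/- Let N, t, k be natural numbers with 1 ≤ k and 2k ≤ t, and let a : Fin N → (Fin t → Option Bool) be an injective family of action sequences such that for every j ∈ Fin N the support of a j has at most k elements. Then, as real numbers, N − 1 ≤ 2 · (2·e·t/k)^k, where e is the base of the natural logarithm. In particular, t ≥ (k/(2e)) · ((N−1)/2)^{1/k}. -/

import Mathlib

lemma card_small_finsets (α : Type*) [Fintype α] [DecidableEq α] (k : ℕ) :
    ((Finset.univ : Finset (Finset α)).filter (fun s => s.card ≤ k)).card
      = ∑ i ∈ Finset.range (k+1), (Fintype.card α).choose i := by
  have h : (Finset.univ : Finset (Finset α)).filter (fun s => s.card ≤ k)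
      = (Finset.range (k+1)).biUnion (fun i => Finset.powersetCard i Finset.univ) := by
    ext s
    simp [Finset.mem_powersetCard, Nat.lt_succ_iff]
  rw [h, Finset.card_biUnion]
  · simp [Finset.card_powersetCard]
  · intro i hi j hj hij
    rw [Function.onFun, Finset.disjoint_left]
    intro s hs hs'
    rw [Finset.mem_powersetCard] at hs hs'
    exact hij (hs.2 ▸ hs'.2)

lemma sum_choose_le_real (n k : ℕ) (hk : 1 ≤ k) (hkn : k ≤ n) :
    ((∑ i ∈ Finset.range (k+1), n.choose i : ℕ) : ℝ)
      ≤ (Real.exp 1 * n / k) ^ k := by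
  have hn0 : 0 < n := by omega
  have hn : 0 < (n : ℝ) := by exact_mod_cast hn0
  have hkR : 0 < (k : ℝ) := by exact_mod_cast hk
  set x : ℝ := k / n with hx
  have hx0 : 0 < x := by positivity
  have hx1 : x ≤ 1 := by
    rw [hx, div_le_one hn]; exact_mod_cast hkn
  have key : x ^ k * ((∑ i ∈ Finset.range (k+1), n.choose i : ℕ) : ℝ)
      ≤ Real.exp k := by
    have h1 : x ^ k * ((∑ i ∈ Finset.range (k+1), n.choose i : ℕ) : ℝ)
        ≤ ∑ i ∈ Finset.range (k+1), (n.choose i : ℝ) * x ^ i := by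
      push_cast
      rw [Finset.mul_sum]
      apply Finset.sum_le_sum
      intro i hi
      rw [Finset.mem_range, Nat.lt_succ_iff] at hi
      rw [mul_comm]
      exact mul_le_mul_of_nonneg_left (pow_le_pow_of_le_one hx0.le hx1 hi)
        (by positivity)
    have h2 : ∑ i ∈ Finset.range (k+1), (n.choose i : ℝ) * x ^ i
        ≤ ∑ i ∈ Finset.range (n+1), (n.choose i : ℝ) * x ^ i := by
      apply Finset.sum_le_sum_of_subset_of_nonneg
      · exact Finset.range_subset_range.2 (by omega)
      · intro i _ _; positivity
    have h3 : ∑ i ∈ Finset.range (n+1), (n.choose i : ℝ) * x ^ i = (x + 1) ^ n := by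
      rw [add_pow]
      refine Finset.sum_congr rfl fun i _ => ?_
      simp [mul_comm]
    have h4 : (x + 1) ^ n ≤ Real.exp k := by
      calc (x + 1) ^ n ≤ Real.exp x ^ n := by
            refine pow_le_pow_left₀ (by positivity) ?_ n
            linarith [Real.add_one_le_exp x]
        _ = Real.exp (n * x) := by rw [← Real.exp_nat_mul]
        _ = Real.exp k := by rw [hx]; field_simp
    linarith
  have hxk : (0:ℝ) < x ^ k := by positivity
  rw [mul_comm] at key
  calc ((∑ i ∈ Finset.range (k+1), n.choose i : ℕ) : ℝ)
      ≤ Real.exp k / x ^ k := (le_div_iff₀ hxk).mpr key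
    _ = (Real.exp 1 * n / k) ^ k := by
        rw [div_eq_iff hxk.ne', ← mul_pow, ← Real.exp_one_pow]
        congr 1
        rw [hx]; field_simp

/-- If `N` distinct action sequences of length `t` each have support of size at
most `k`, with `1 ≤ k` and `2k ≤ t`, then `N - 1 ≤ 2·(2et/k)^k`; in particular
`t ≥ (k/(2e)) · ((N-1)/2)^(1/k)`. -/
theorem stmt_9 (N t k : ℕ) (hk : 1 ≤ k) (hkt : 2 * k ≤ t)
    (a : Fin N → (Fin t → Option Bool)) (ha : Function.Injective a)
    (hsupp : ∀ j : Fin N, (Finset.univ.filter (fun i : Fin t => a j i ≠ none)).card ≤ k) :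
    (N : ℝ) - 1 ≤ 2 * (2 * Real.exp 1 * (t : ℝ) / (k : ℝ)) ^ k ∧
    (t : ℝ) ≥ ((k : ℝ) / (2 * Real.exp 1)) * (((N : ℝ) - 1) / 2) ^ ((1 : ℝ) / (k : ℝ)) := by
  have he : (1:ℝ) < Real.exp 1 := by
    have := Real.exp_one_gt_d9; linarith
  have hkR : (0:ℝ) < k := by exact_mod_cast hk
  have hktR : 2 * (k:ℝ) ≤ t := by exact_mod_cast hkt
  have htR : (0:ℝ) < t := by linarith
  set F : Fin N → Finset (Fin t × Bool) :=
    fun j => Finset.univ.filter (fun p : Fin t × Bool => a j p.1 = some p.2) with hF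
  have hFmem : ∀ j i b, (i, b) ∈ F j ↔ a j i = some b := by
    intro j i b; simp [hF]
  have hFcard : ∀ j, (F j).card ≤ k := by
    intro j
    refine le_trans ?_ (hsupp j)
    apply Finset.card_le_card_of_injOn Prod.fst
    · intro p hp
      have hp2 : a j p.1 = some p.2 := by simpa [hF] using hp
      simp only [Finset.mem_coe, Finset.mem_filter, Finset.mem_univ, true_and]
      rw [hp2]; simp
    · intro p hp q hq hpq
      have hp2 : a j p.1 = some p.2 := by simpa [hF] using hp
      have hq2 : a j q.1 = some q.2 := by simpa [hF] using hq
      have : some p.2 = some q.2 := by rw [← hp2, ← hq2, hpq]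
      exact Prod.ext hpq (by simpa using this)
  have hFinj : Function.Injective F := by
    intro j j' h
    apply ha
    funext i
    have key : ∀ b, a j i = some b ↔ a j' i = some b := by
      intro b; rw [← hFmem j i b, ← hFmem j' i b, h]
    cases hj : a j i with
    | none =>
      cases hj' : a j' i with
      | none => rfl
      | some b => exact absurd ((key b).mpr hj') (by simp [hj])
    | some b => exact ((key b).mp hj).symm
  have hcount : N ≤ ∑ i ∈ Finset.range (k+1), (2*t).choose i := by
    have h1 : N ≤ ((Finset.univ : Finset (Finset (Fin t × Bool))).filter
        (fun s => s.card ≤ k)).card := by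
      have hmaps : ∀ j ∈ (Finset.univ : Finset (Fin N)), F j ∈
          (Finset.univ : Finset (Finset (Fin t × Bool))).filter (fun s => s.card ≤ k) := by
        intro j _
        simp only [Finset.mem_filter, Finset.mem_univ, true_and]
        exact hFcard j
      have := Finset.card_le_card_of_injOn F hmaps hFinj.injOn
      simpa using this
    have h2 : Fintype.card (Fin t × Bool) = 2 * t := by simp [mul_comm]
    rw [card_small_finsets, h2] at h1
    exact h1
  have hNle : (N : ℝ) ≤ (2 * Real.exp 1 * t / k) ^ k := by
    calc (N : ℝ) ≤ ((∑ i ∈ Finset.range (k+1), (2*t).choose i : ℕ) : ℝ) := by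
          exact_mod_cast hcount
      _ ≤ (Real.exp 1 * ((2*t : ℕ) : ℝ) / k) ^ k := sum_choose_le_real (2*t) k hk (by omega)
      _ = (2 * Real.exp 1 * t / k) ^ k := by push_cast; ring_nf
  have hbase : (1:ℝ) ≤ 2 * Real.exp 1 * t / k := by
    rw [le_div_iff₀ hkR]
    nlinarith
  have hpow1 : (1:ℝ) ≤ (2 * Real.exp 1 * t / k) ^ k := by
    calc (1:ℝ) = 1 ^ k := (one_pow k).symm
      _ ≤ (2 * Real.exp 1 * t / k) ^ k := pow_le_pow_left₀ zero_le_one hbase k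
  constructor
  · linarith
  · -- second part
    set y : ℝ := ((N : ℝ) - 1) / 2 with hy
    rcases le_or_gt 0 y with hy0 | hy0
    · have h1 : y ≤ (2 * Real.exp 1 * t / k) ^ k := by
        rw [hy]; rw [div_le_iff₀ (by norm_num : (0:ℝ) < 2)]; linarith
      have h2 : y ^ ((1:ℝ)/k) ≤ 2 * Real.exp 1 * t / k := by
        have := Real.rpow_le_rpow hy0 h1 (by positivity : (0:ℝ) ≤ 1/k)
        calc y ^ ((1:ℝ)/k) ≤ ((2 * Real.exp 1 * t / k) ^ k) ^ ((1:ℝ)/k) := this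
          _ = 2 * Real.exp 1 * t / k := by
            rw [← Real.rpow_natCast (2 * Real.exp 1 * t / k) k, ← Real.rpow_mul (by positivity)]
            rw [mul_one_div, div_self (by positivity : (k:ℝ) ≠ 0), Real.rpow_one]
      rw [ge_iff_le]
      calc (k:ℝ) / (2 * Real.exp 1) * y ^ ((1:ℝ)/k)
          ≤ (k:ℝ) / (2 * Real.exp 1) * (2 * Real.exp 1 * t / k) := by
            exact mul_le_mul_of_nonneg_left h2 (by positivity)
        _ = t := by field_simp
    · have habs : y ^ ((1:ℝ)/k) ≤ 1 := by
        calc y ^ ((1:ℝ)/k) ≤ |y| ^ ((1:ℝ)/k) := by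
              calc y ^ ((1:ℝ)/k) ≤ |y ^ ((1:ℝ)/k)| := le_abs_self _
                _ ≤ |y| ^ ((1:ℝ)/k) := Real.abs_rpow_le_abs_rpow _ _
          _ ≤ 1 := by
            apply Real.rpow_le_one (abs_nonneg _) ?_ (by positivity)
            rw [hy, abs_div]
            have hN1 : (N:ℝ) - 1 < 0 := by
              by_contra hcon
              push_neg at hcon
              rw [hy] at hy0; linarith
            rw [abs_of_neg hN1]
            have : (0:ℝ) ≤ (N:ℝ) := by positivity
            rw [abs_of_pos (by norm_num : (0:ℝ) < 2)]
            rw [div_le_one (by norm_num : (0:ℝ) < 2)]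
            linarith
      rw [ge_iff_le]
      calc (k:ℝ) / (2 * Real.exp 1) * y ^ ((1:ℝ)/k)
          ≤ (k:ℝ) / (2 * Real.exp 1) * 1 := mul_le_mul_of_nonneg_left habs (by positivity)
        _ = (k:ℝ) / (2 * Real.exp 1) := mul_one _
        _ ≤ (k:ℝ) := by
            rw [div_le_iff₀ (by positivity)]
            nlinarith
        _ ≤ t := by linarith
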